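/- Let A : X → Y be bounded linear with c1‖x‖_X ≤ ‖Ax‖_Z ≤ c2‖x‖_X for a Hilbert space Z ⊆ Y, let {f_k} be a frame over Y, and suppose there are coefficients α_k ≠ 0 with a1‖y‖_Z² ≤ Σ_k α_k²|⟨y,f_k⟩_Y|² ≤ a2‖y‖_Z² for all y ∈ Z. If λ_k ∈ ℂ satisfy 0 < b1 ≤ α_k|λ_k| ≤ b2 < ∞ and e_k := λ̄_k⁻¹ A* f_k, then {e_k} is a frame over X with bounds a1(c1/b2)² and a2(c2/b1)². -/

import Mathlib

open scoped ComplexInnerProductSpace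

/-- Stability property I: if `c1‖x‖_X ≤ ‖Ax‖_Z ≤ c2‖x‖_X` (with `B : X →L Z` the
co-restriction of `A` along the embedding `E : Z → Y`), `{f k}` is a frame over `Y`,
`a1‖y‖_Z² ≤ ∑ α k² |⟪f k, y⟫_Y|² ≤ a2‖y‖_Z²` for `y ∈ Z`, and `b1 ≤ α k |λ k| ≤ b2`,
then `e k := (conj (λ k))⁻¹ • A* (f k)` is a frame over `X` with bounds
`a1 (c1/b2)²` and `a2 (c2/b1)²`. -/
theorem stability_frame_construction
    {X Y Z : Type*} [NormedAddCommGroup X] [InnerProductSpace ℂ X] [CompleteSpace X]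
    [NormedAddCommGroup Y] [InnerProductSpace ℂ Y] [CompleteSpace Y]
    [NormedAddCommGroup Z] [InnerProductSpace ℂ Z] [CompleteSpace Z]
    (A : X →L[ℂ] Y)
    -- `E` embeds the subspace `Z` into `Y`
    (E : Z →L[ℂ] Y) (hE : Function.Injective E)
    -- `B` is `A` viewed as an operator into `Z`: `A = E ∘ B`
    (B : X →L[ℂ] Z) (hAB : ∀ x, E (B x) = A x)
    (c1 c2 a1 a2 b1 b2 : ℝ)
    (hc1 : 0 < c1) (hc2 : 0 < c2) (ha1 : 0 < a1) (ha2 : 0 < a2)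
    (hb1 : 0 < b1) (hb2 : 0 < b2)
    -- stability: `c1‖x‖_X ≤ ‖Ax‖_Z ≤ c2‖x‖_X`
    (hstab : ∀ x : X, c1 * ‖x‖ ≤ ‖B x‖ ∧ ‖B x‖ ≤ c2 * ‖x‖)
    -- `{f k}` is a frame over `Y`
    (f : ℕ → Y) (C1 C2 : ℝ) (hC1 : 0 < C1) (hC2 : 0 < C2)
    (hframe_f : ∀ y : Y, (Summable fun k => ‖⟪f k, y⟫‖ ^ 2) ∧
      C1 * ‖y‖ ^ 2 ≤ ∑' k, ‖⟪f k, y⟫‖ ^ 2 ∧ ∑' k, ‖⟪f k, y⟫‖ ^ 2 ≤ C2 * ‖y‖ ^ 2)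
    -- weighted norm equivalence for the `Z`-norm
    (α : ℕ → ℝ) (hα : ∀ k, α k ≠ 0)
    (hZnorm : ∀ z : Z, (Summable fun k => (α k) ^ 2 * ‖⟪f k, E z⟫‖ ^ 2) ∧
      a1 * ‖z‖ ^ 2 ≤ ∑' k, (α k) ^ 2 * ‖⟪f k, E z⟫‖ ^ 2 ∧
      ∑' k, (α k) ^ 2 * ‖⟪f k, E z⟫‖ ^ 2 ≤ a2 * ‖z‖ ^ 2)
    (lam : ℕ → ℂ)
    (hlam : ∀ k, b1 ≤ α k * ‖lam k‖ ∧ α k * ‖lam k‖ ≤ b2)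
    (e : ℕ → X)
    (he : ∀ k, e k = ((starRingEnd ℂ) (lam k))⁻¹ • (ContinuousLinearMap.adjoint A) (f k)) :
    ∀ x : X, (Summable fun k => ‖⟪e k, x⟫‖ ^ 2) ∧
      a1 * (c1 / b2) ^ 2 * ‖x‖ ^ 2 ≤ ∑' k, ‖⟪e k, x⟫‖ ^ 2 ∧
      ∑' k, ‖⟪e k, x⟫‖ ^ 2 ≤ a2 * (c2 / b1) ^ 2 * ‖x‖ ^ 2 := by
  intro x
  set z := B x with hz
  have hEz : E z = A x := hAB x
  have hlk : ∀ k, lam k ≠ 0 := by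
    intro k h
    have := (hlam k).1
    rw [h, norm_zero, mul_zero] at this
    linarith
  have hαpos : ∀ k, 0 < α k := by
    intro k
    rcases (hα k).lt_or_gt with h | h
    · exfalso
      have h1 := (hlam k).1
      have h2 : 0 < ‖lam k‖ := norm_pos_iff.mpr (hlk k)
      nlinarith
    · exact h
  have key : ∀ k, ‖⟪e k, x⟫‖ ^ 2 = (α k) ^ 2 * ‖⟪f k, E z⟫‖ ^ 2 / (α k * ‖lam k‖) ^ 2 := by
    intro k
    have hnz : ‖lam k‖ ≠ 0 := norm_ne_zero_iff.mpr (hlk k)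
    rw [hEz]
    have hnorm : ‖⟪e k, x⟫‖ = ‖lam k‖⁻¹ * ‖⟪f k, A x⟫‖ := by
      rw [he k, inner_smul_left, ContinuousLinearMap.adjoint_inner_left]
      simp [map_inv₀, Complex.conj_conj, norm_mul]
    rw [hnorm]
    field_simp [hα k, hnz]
  have hp1 : ∀ k, b1 ≤ α k * ‖lam k‖ := fun k => (hlam k).1
  have hp2 : ∀ k, α k * ‖lam k‖ ≤ b2 := fun k => (hlam k).2
  have hppos : ∀ k, 0 < α k * ‖lam k‖ := fun k => lt_of_lt_of_le hb1 (hp1 k)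
  obtain ⟨hSz, hZ1, hZ2⟩ := hZnorm z
  have hub : ∀ k, ‖⟪e k, x⟫‖ ^ 2 ≤ (α k) ^ 2 * ‖⟪f k, E z⟫‖ ^ 2 / b1 ^ 2 := by
    intro k
    rw [key k]
    have hle : b1 ^ 2 ≤ (α k * ‖lam k‖) ^ 2 := by nlinarith [hppos k, hp1 k]
    exact div_le_div_of_nonneg_left (by positivity) (by positivity) hle
  have hlb : ∀ k, (α k) ^ 2 * ‖⟪f k, E z⟫‖ ^ 2 / b2 ^ 2 ≤ ‖⟪e k, x⟫‖ ^ 2 := by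
    intro k
    rw [key k]
    have hle : (α k * ‖lam k‖) ^ 2 ≤ b2 ^ 2 := by nlinarith [hppos k, hp2 k]
    exact div_le_div_of_nonneg_left (by positivity) (pow_pos (hppos k) 2) hle
  have hsum : Summable fun k => ‖⟪e k, x⟫‖ ^ 2 :=
    Summable.of_nonneg_of_le (fun k => by positivity) hub (hSz.div_const _)
  refine ⟨hsum, ?_, ?_⟩
  · have h1 : ∑' k, (α k) ^ 2 * ‖⟪f k, E z⟫‖ ^ 2 / b2 ^ 2 ≤ ∑' k, ‖⟪e k, x⟫‖ ^ 2 :=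
      Summable.tsum_le_tsum hlb (hSz.div_const _) hsum
    rw [tsum_div_const] at h1
    have h3 : c1 * ‖x‖ ≤ ‖z‖ := (hstab x).1
    have hznn : 0 ≤ ‖z‖ := norm_nonneg z
    have hxnn : 0 ≤ ‖x‖ := norm_nonneg x
    have hsq : (c1 * ‖x‖) ^ 2 ≤ ‖z‖ ^ 2 := pow_le_pow_left₀ (by positivity) h3 2
    have h4 : a1 * (c1 / b2) ^ 2 * ‖x‖ ^ 2 ≤ a1 * ‖z‖ ^ 2 / b2 ^ 2 := by
      calc a1 * (c1 / b2) ^ 2 * ‖x‖ ^ 2 = a1 * (c1 * ‖x‖) ^ 2 / b2 ^ 2 := by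
            field_simp
        _ ≤ a1 * ‖z‖ ^ 2 / b2 ^ 2 := by gcongr
    have h2 : a1 * ‖z‖ ^ 2 / b2 ^ 2 ≤ (∑' k, (α k) ^ 2 * ‖⟪f k, E z⟫‖ ^ 2) / b2 ^ 2 := by
      gcongr
    linarith
  · have h1 : ∑' k, ‖⟪e k, x⟫‖ ^ 2 ≤ ∑' k, (α k) ^ 2 * ‖⟪f k, E z⟫‖ ^ 2 / b1 ^ 2 :=
      Summable.tsum_le_tsum hub hsum (hSz.div_const _)
    rw [tsum_div_const] at h1
    have h3 : ‖z‖ ≤ c2 * ‖x‖ := (hstab x).2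
    have hznn : 0 ≤ ‖z‖ := norm_nonneg z
    have hxnn : 0 ≤ ‖x‖ := norm_nonneg x
    have hsq : ‖z‖ ^ 2 ≤ (c2 * ‖x‖) ^ 2 := pow_le_pow_left₀ hznn h3 2
    have h4 : a2 * ‖z‖ ^ 2 / b1 ^ 2 ≤ a2 * (c2 / b1) ^ 2 * ‖x‖ ^ 2 := by
      calc a2 * ‖z‖ ^ 2 / b1 ^ 2 ≤ a2 * (c2 * ‖x‖) ^ 2 / b1 ^ 2 := by gcongr
        _ = a2 * (c2 / b1) ^ 2 * ‖x‖ ^ 2 := by field_simp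
    have h2 : (∑' k, (α k) ^ 2 * ‖⟪f k, E z⟫‖ ^ 2) / b1 ^ 2 ≤ a2 * ‖z‖ ^ 2 / b1 ^ 2 := by
      gcongr
    linarith
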